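/- Define the relation R between x : ℕ → ℕ and y : ℕ × ℕ → ℕ by R(x,y) iff for every n there exists k with x k ≠ y (n,k). Then R is a Gδ subset of the product space (ℕ → ℕ) × (ℕ × ℕ → ℕ) (both factors carrying the product topology), and the least cardinality of a set 𝒳 ⊆ ℕ → ℕ such that for every y : ℕ × ℕ → ℕ there exists x ∈ 𝒳 with R(x,y) equals ℵ₁. In particular ℵ₁ is a uniform Π⁰₂-characteristic. -/
import Mathlib


open Cardinal Set

theorem aleph_one_uniform_pi02 :
    IsGδ {p : (ℕ → ℕ) × (ℕ × ℕ → ℕ) | ∀ n : ℕ, ∃ k : ℕ, p.1 k ≠ p.2 (n, k)} ∧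
    sInf {c : Cardinal | ∃ 𝒳 : Set (ℕ → ℕ),
        (∀ y : ℕ × ℕ → ℕ, ∃ x ∈ 𝒳, ∀ n : ℕ, ∃ k : ℕ, x k ≠ y (n, k)) ∧ c = #𝒳} =
      Cardinal.aleph 1 := by
  constructor
  · have : {p : (ℕ → ℕ) × (ℕ × ℕ → ℕ) | ∀ n : ℕ, ∃ k : ℕ, p.1 k ≠ p.2 (n, k)} =
        ⋂ n : ℕ, ⋃ k : ℕ, {p : (ℕ → ℕ) × (ℕ × ℕ → ℕ) | p.1 k ≠ p.2 (n, k)} := by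
      ext p; simp
    rw [this]
    refine IsGδ.iInter_of_isOpen fun n => isOpen_iUnion fun k => ?_
    have h1 : Continuous fun p : (ℕ → ℕ) × (ℕ × ℕ → ℕ) => p.1 k :=
      (continuous_apply k).comp continuous_fst
    have h2 : Continuous fun p : (ℕ → ℕ) × (ℕ × ℕ → ℕ) => p.2 (n, k) :=
      (continuous_apply (n, k)).comp continuous_snd
    exact isOpen_ne_fun h1 h2
  · -- characterize the property
    have key : ∀ 𝒳 : Set (ℕ → ℕ),
        (∀ y : ℕ × ℕ → ℕ, ∃ x ∈ 𝒳, ∀ n : ℕ, ∃ k : ℕ, x k ≠ y (n, k)) ↔ aleph 1 ≤ #𝒳 := by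
      intro 𝒳
      constructor
      · intro h
        by_contra hlt
        have hcount : 𝒳.Countable :=
          (Cardinal.countable_iff_lt_aleph_one 𝒳).mpr (not_le.mp hlt)
        rcases 𝒳.eq_empty_or_nonempty with hE | hne
        · obtain ⟨x, hx, -⟩ := h 0
          simp [hE] at hx
        · obtain ⟨f, hf⟩ := hcount.exists_surjective hne
          obtain ⟨x, hx, hR⟩ := h (fun q => (f q.1 : ℕ → ℕ) q.2)
          obtain ⟨n, hn⟩ := hf ⟨x, hx⟩
          obtain ⟨k, hk⟩ := hR n
          apply hk
          rw [hn]
      · intro h y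
        set T : Set (ℕ → ℕ) := Set.range (fun n => fun k => y (n, k)) with hT
        have hTc : #T ≤ ℵ₀ := mk_range_le.trans (by simp)
        have : ¬ (𝒳 ⊆ T) := by
          intro hsub
          have := (Cardinal.mk_le_mk_of_subset hsub).trans hTc
          have h1 : aleph 1 ≤ ℵ₀ := h.trans this
          exact Cardinal.aleph0_lt_aleph_one.not_ge h1
        obtain ⟨x, hx, hxT⟩ := Set.not_subset.mp this
        refine ⟨x, hx, fun n => ?_⟩
        rw [← Function.ne_iff]
        intro heq
        exact hxT ⟨n, heq.symm⟩
    have hmem : aleph 1 ∈ {c : Cardinal | ∃ 𝒳 : Set (ℕ → ℕ),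
        (∀ y : ℕ × ℕ → ℕ, ∃ x ∈ 𝒳, ∀ n : ℕ, ∃ k : ℕ, x k ≠ y (n, k)) ∧ c = #𝒳} := by
      have hle : aleph 1 ≤ #(ℕ → ℕ) := by
        have h2 : (𝔠 : Cardinal) ≤ #(ℕ → ℕ) := by
          rw [Cardinal.mk_arrow, Cardinal.mk_nat, Cardinal.lift_id,
            Cardinal.continuum]
          exact Cardinal.power_le_power_right
            ((Cardinal.nat_lt_aleph0 2).le)
        exact aleph_one_le_continuum.trans h2
      obtain ⟨𝒳, h𝒳⟩ := Cardinal.le_mk_iff_exists_set.mp hle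
      exact ⟨𝒳, (key 𝒳).mpr h𝒳.ge, h𝒳.symm⟩
    refine le_antisymm (csInf_le' hmem) (le_csInf ⟨_, hmem⟩ ?_)
    rintro c ⟨𝒳, hP, rfl⟩
    exact (key 𝒳).mp hP
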